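/- arXiv:2404.05272 — 5 statements merged into one kernel-verified Lean document; each statement's English description precedes it below -/
import Mathlib

section
/- Let m ≥ 1 and suppose given real numbers l₁ < r₁ ≤ l₂ < r₂ ≤ ⋯ ≤ l_m < r_m and continuous functions g₁, …, g_m : ℝ → ℝ with g_j(a) ≥ 0 for all a ∈ [l_j, r_j]. Let f : ℝ → ℝ be continuous and strictly increasing. Assume: (i) for each j, the difference g_j − f has the single-crossing property on D_j = {a ∈ ℝ : g_j(a) ≥ 0 and f(a) ≥ 0}, i.e., whenever (g_j − f)(a) = 0 with a ∈ D_j, then (g_j − f)(a₊) < 0 for all a₊ ∈ D_j with a₊ > a and (g_j − f)(a₋) > 0 for all a₋ ∈ D_j with a₋ < a; (ii) for each j < m, if r_j = l_{j+1} then g_j(r_j) ≥ g_{j+1}(r_j); (iii) for each j < m, if r_j < l_{j+1} then g_{j+1}(l_{j+1}) = 0. Then there is at most one point a ∈ ⋃_{j=1}^m (l_j, r_j] such that f(a) = g_j(a), where j is the index with a ∈ (l_j, r_j]. -/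
/-- Auxiliary step: if on `[L, R]` the function `g` is nonnegative, `g - f` has the
single-crossing property, and `g L ≤ f L` with `0 ≤ f L`, then `g < f` on `(L, R]`. -/
lemma sc_step (g f : ℝ → ℝ) (L R : ℝ)
    (hgc : Continuous g) (hfc : Continuous f) (hfm : StrictMono f)
    (hgnn : ∀ x ∈ Set.Icc L R, 0 ≤ g x)
    (hsc : ∀ a : ℝ, 0 ≤ g a → 0 ≤ f a → g a - f a = 0 →
      (∀ ap : ℝ, 0 ≤ g ap → 0 ≤ f ap → a < ap → g ap - f ap < 0) ∧
      (∀ am : ℝ, 0 ≤ g am → 0 ≤ f am → am < a → 0 < g am - f am))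
    (hgL : g L ≤ f L) (hfL : 0 ≤ f L) :
    ∀ x ∈ Set.Ioc L R, g x < f x := by
  rintro x ⟨hLx, hxR⟩
  by_contra hcon
  push_neg at hcon
  have hLR : L ≤ x := hLx.le
  have hcont : ContinuousOn (fun t => g t - f t) (Set.Icc L x) :=
    (hgc.sub hfc).continuousOn
  obtain ⟨c, hc, hc0⟩ := intermediate_value_Icc hLR hcont
    ⟨sub_nonpos.mpr hgL, sub_nonneg.mpr hcon⟩
  have hc0' : g c - f c = 0 := hc0
  have hgc0 : 0 ≤ g c := hgnn c ⟨hc.1, hc.2.trans hxR⟩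
  have hfc0 : 0 ≤ f c := by linarith
  obtain ⟨h1, h2⟩ := hsc c hgc0 hfc0 hc0'
  rcases lt_or_eq_of_le hc.2 with hcx | hcx
  · have hfx : 0 ≤ f x := le_of_lt (lt_of_le_of_lt hfL (hfm hLx))
    have := h1 x (hgnn x ⟨hLx.le, hxR⟩) hfx hcx
    linarith
  · have := h2 L (hgnn L ⟨le_rfl, hLx.le.trans hxR⟩) hfL (hcx ▸ hLx)
    linarith

/-- for a fixed price, the utility function `f` of the new model
(continuous and strictly increasing) and the enveloping utility function of the
data chain (given piecewise by `g j` on `(l j, r j]`) agree in at most one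
point of the support of the enveloping function. -/
theorem envelope_at_most_one_crossing (m : ℕ) (hm : 1 ≤ m)
    (l r : ℕ → ℝ) (g : ℕ → ℝ → ℝ) (f : ℝ → ℝ)
    (hlr : ∀ j, j < m → l j < r j)
    (hord : ∀ j, j + 1 < m → r j ≤ l (j + 1))
    (hgcont : ∀ j, j < m → Continuous (g j))
    (hgnn : ∀ j, j < m → ∀ a ∈ Set.Icc (l j) (r j), 0 ≤ g j a)
    (hfcont : Continuous f) (hfmono : StrictMono f)
    (hsc : ∀ j, j < m → ∀ a : ℝ, 0 ≤ g j a → 0 ≤ f a → g j a - f a = 0 →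
      (∀ ap : ℝ, 0 ≤ g j ap → 0 ≤ f ap → a < ap → g j ap - f ap < 0) ∧
      (∀ am : ℝ, 0 ≤ g j am → 0 ≤ f am → am < a → 0 < g j am - f am))
    (hjump : ∀ j, j + 1 < m → r j = l (j + 1) → g (j + 1) (r j) ≤ g j (r j))
    (hgap : ∀ j, j + 1 < m → r j < l (j + 1) → g (j + 1) (l (j + 1)) = 0) :
    ∀ j, j < m → ∀ k, k < m →
      ∀ a ∈ Set.Ioc (l j) (r j), ∀ a' ∈ Set.Ioc (l k) (r k),
        f a = g j a → f a' = g k a' → a = a' := by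
  -- chain of intervals is ordered
  have chain : ∀ q, q < m → ∀ p, p < q → r p ≤ l q := by
    intro q
    induction q with
    | zero => intro _ p hp; omega
    | succ n ih =>
      intro hq p hp
      rcases Nat.lt_succ_iff_lt_or_eq.mp hp with h | h
      · exact le_trans (ih (by omega) p h) (le_trans (hlr n (by omega)).le (hord n hq))
      · subst h; exact hord p hq
  -- key propagation lemma: a crossing at `a` in interval `j` forces `g i < f`
  -- strictly after `a` on every later interval `i ≥ j`.
  have key : ∀ j, j < m → ∀ a ∈ Set.Ioc (l j) (r j), f a = g j a →
      ∀ i, j ≤ i → i < m → ∀ x ∈ Set.Ioc (l i) (r i), a < x → g i x < f x := by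
    intro j hj a ha hfa i hji
    have hfa0 : 0 ≤ f a := hfa ▸ hgnn j hj a (Set.Ioc_subset_Icc_self ha)
    induction i, hji using Nat.le_induction with
    | base =>
      intro him x hx hax
      exact sc_step (g j) f a (r j) (hgcont j hj) hfcont hfmono
        (fun y hy => hgnn j hj y ⟨ha.1.le.trans hy.1, hy.2⟩) (hsc j hj)
        (le_of_eq hfa.symm) hfa0 x ⟨hax, hx.2⟩
    | succ i hji ih =>
      intro hi1 x hx hax
      have hi : i < m := by omega
      -- a ≤ r i
      have hari : a ≤ r i := by
        rcases eq_or_lt_of_le hji with h | h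
        · exact h ▸ ha.2
        · exact ha.2.trans (le_trans (chain i hi j h) (hlr i hi).le)
      have hfr : g i (r i) ≤ f (r i) ∧ 0 ≤ f (r i) := by
        rcases lt_or_eq_of_le hari with h | h
        · have hlt := ih hi (r i) ⟨hlr i hi, le_rfl⟩ h
          exact ⟨hlt.le, le_of_lt (lt_of_le_of_lt hfa0 (hfmono h))⟩
        · have hij : j = i := by
            by_contra hne
            have hlt : j < i := lt_of_le_of_ne hji hne
            have : a < r i :=
              lt_of_le_of_lt (ha.2.trans (chain i hi j hlt)) (hlr i hi)
            exact this.ne h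
          subst hij
          rw [← h]
          exact ⟨hfa.ge, hfa0⟩
      have hord' := hord i hi1
      have hmono : f (r i) ≤ f (l (i + 1)) := hfmono.monotone hord'
      have hfl : g (i + 1) (l (i + 1)) ≤ f (l (i + 1)) ∧ 0 ≤ f (l (i + 1)) := by
        rcases lt_or_eq_of_le hord' with h | h
        · rw [hgap i hi1 h]
          exact ⟨hfr.2.trans hmono, hfr.2.trans hmono⟩
        · rw [← h]
          exact ⟨(hjump i hi1 h).trans hfr.1, hfr.2⟩
      exact sc_step (g (i + 1)) f (l (i + 1)) (r (i + 1)) (hgcont _ hi1) hfcont hfmono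
        (hgnn _ hi1) (hsc _ hi1) hfl.1 hfl.2 x hx
  intro j hj k hk a ha a' ha' hfa hfa'
  rcases lt_trichotomy a a' with h | h | h
  · exfalso
    have hjk : j ≤ k := by
      by_contra hkj
      push_neg at hkj
      have : a' ≤ l j := (ha'.2).trans (chain j hj k hkj)
      linarith [ha.1]
    have := key j hj a ha hfa k hjk hk a' ha' h
    linarith
  · exact h
  · exfalso
    have hkj : k ≤ j := by
      by_contra hjk
      push_neg at hjk
      have : a ≤ l k := (ha.2).trans (chain k hk j hjk)
      linarith [ha'.1]
    have := key k hk a' ha' hfa' j hkj hj a ha h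
    linarith
end

section
/- Let n ≥ 1, let A̲ < A₁ < A₂ < ⋯ < A_n be real numbers, and for each j = 1, …, n let b_j : ℝ → ℝ be continuous and strictly increasing on the interval [A̲, A_j]. Assume that for all j < k the difference b_j − b_k has the single-crossing property on D_{jk} = {a ∈ [A̲, A_j] : b_j(a) ≥ 0 and b_k(a) ≥ 0}, i.e., whenever (b_j − b_k)(a) = 0 with a ∈ D_{jk}, then (b_j − b_k)(a₊) < 0 for all a₊ ∈ D_{jk} with a₊ > a and (b_j − b_k)(a₋) > 0 for all a₋ ∈ D_{jk} with a₋ < a. For each j define the market allocation M_j = {a ∈ [A̲, A_j] : b_j(a) ≥ 0, and for every k ≠ j with a ≤ A_k and b_k(a) ≥ 0, either b_j(a) > b_k(a), or b_j(a) = b_k(a) and k < j}. Then each M_j is order-connected (an interval): if a, a' ∈ M_j and a ≤ a'' ≤ a', then a'' ∈ M_j. -/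
/-- Theorem thm:connect: for accuracy-compatible utility
functions, the market allocation of every model is order-connected. -/
theorem market_allocation_connected (n : ℕ) (hn : 1 ≤ n)
    (Alo : ℝ) (A : Fin n → ℝ) (b : Fin n → ℝ → ℝ)
    (hAlo : ∀ j : Fin n, Alo < A j) (hAmono : StrictMono A)
    (hcont : ∀ j : Fin n, ContinuousOn (b j) (Set.Icc Alo (A j)))
    (hmono : ∀ j : Fin n, StrictMonoOn (b j) (Set.Icc Alo (A j)))
    (hsc : ∀ j k : Fin n, j < k →
      ∀ a ∈ Set.Icc Alo (A j), 0 ≤ b j a → 0 ≤ b k a → b j a - b k a = 0 →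
        (∀ ap ∈ Set.Icc Alo (A j), 0 ≤ b j ap → 0 ≤ b k ap → a < ap →
          b j ap - b k ap < 0) ∧
        (∀ am ∈ Set.Icc Alo (A j), 0 ≤ b j am → 0 ≤ b k am → am < a →
          0 < b j am - b k am)) :
    ∀ j : Fin n,
      ∀ a ∈ {a : ℝ | a ∈ Set.Icc Alo (A j) ∧ 0 ≤ b j a ∧
        ∀ k : Fin n, k ≠ j → a ≤ A k → 0 ≤ b k a →
          b k a < b j a ∨ (b j a = b k a ∧ k < j)},
      ∀ a' ∈ {a : ℝ | a ∈ Set.Icc Alo (A j) ∧ 0 ≤ b j a ∧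
        ∀ k : Fin n, k ≠ j → a ≤ A k → 0 ≤ b k a →
          b k a < b j a ∨ (b j a = b k a ∧ k < j)},
      ∀ a'' : ℝ, a ≤ a'' → a'' ≤ a' →
        a'' ∈ {a : ℝ | a ∈ Set.Icc Alo (A j) ∧ 0 ≤ b j a ∧
          ∀ k : Fin n, k ≠ j → a ≤ A k → 0 ≤ b k a →
            b k a < b j a ∨ (b j a = b k a ∧ k < j)} := by
  intro j a ha a' ha' a'' h1 h2
  obtain ⟨⟨haAlo, haA⟩, hbja, hak⟩ := ha
  obtain ⟨⟨ha'Alo, ha'A⟩, hbja', ha'k⟩ := ha'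
  have hamem : a ∈ Set.Icc Alo (A j) := ⟨haAlo, haA⟩
  have ha'mem : a' ∈ Set.Icc Alo (A j) := ⟨ha'Alo, ha'A⟩
  have ha''mem : a'' ∈ Set.Icc Alo (A j) := ⟨le_trans haAlo h1, le_trans h2 ha'A⟩
  have hbja'' : 0 ≤ b j a'' :=
    le_trans hbja ((hmono j).monotoneOn hamem ha''mem h1)
  refine ⟨ha''mem, hbja'', ?_⟩
  intro k hk hAk'' hbk
  rcases hk.lt_or_gt with hkj | hjk
  · -- k < j : A k < A j
    rcases lt_trichotomy (b k a'') (b j a'') with h | h | h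
    · exact Or.inl h
    · exact Or.inr ⟨h.symm, hkj⟩
    · exfalso
      have hAkj : A k < A j := hAmono hkj
      have hsubk : Set.Icc a a'' ⊆ Set.Icc Alo (A k) := fun x hx =>
        ⟨le_trans haAlo hx.1, le_trans hx.2 hAk''⟩
      have hsubj : Set.Icc a a'' ⊆ Set.Icc Alo (A j) := fun x hx =>
        ⟨le_trans haAlo hx.1, le_trans (le_trans hx.2 hAk'') hAkj.le⟩
      have hcontf : ContinuousOn (fun x => b k x - b j x) (Set.Icc a a'') :=
        ((hcont k).mono hsubk).sub ((hcont j).mono hsubj)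
      have hfa : b k a - b j a ≤ 0 := by
        by_cases hbka : 0 ≤ b k a
        · rcases hak k hk (le_trans h1 hAk'') hbka with h' | h'
          · linarith
          · linarith [h'.1]
        · linarith [not_le.mp hbka, hbja]
      have h0mem : (0 : ℝ) ∈ Set.Icc (b k a - b j a) (b k a'' - b j a'') :=
        ⟨hfa, by linarith⟩
      obtain ⟨c, hc, hfc0⟩ := intermediate_value_Icc h1 hcontf h0mem
      have hfc : b k c - b j c = 0 := hfc0
      have hcmemj : c ∈ Set.Icc Alo (A j) := hsubj hc
      have hcmemk : c ∈ Set.Icc Alo (A k) := hsubk hc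
      have hbjc : 0 ≤ b j c :=
        le_trans hbja ((hmono j).monotoneOn hamem hcmemj hc.1)
      have hbkc : 0 ≤ b k c := by
        have : b k c = b j c := by linarith [hfc]
        linarith
      have hca'' : c < a'' := lt_of_le_of_ne hc.2 (by
        intro hEq; rw [hEq] at hfc; linarith)
      have := (hsc k j hkj c hcmemk hbkc hbjc (by linarith [hfc])).1 a''
        ⟨le_trans haAlo h1, hAk''⟩ hbk hbja'' hca''
      linarith
  · -- j < k : A j < A k
    have hAjk : A j < A k := hAmono hjk
    by_cases hbka' : 0 ≤ b k a'
    · have hga' : 0 < b j a' - b k a' := by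
        rcases ha'k k hk (le_trans ha'A hAjk.le) hbka' with h' | h'
        · linarith
        · exact absurd h'.2 (lt_asymm hjk)
      rcases lt_or_ge (b k a'') (b j a'') with h | h
      · exact Or.inl h
      · exfalso
        have hsubj : Set.Icc a'' a' ⊆ Set.Icc Alo (A j) := fun x hx =>
          ⟨le_trans ha''mem.1 hx.1, le_trans hx.2 ha'A⟩
        have hsubk : Set.Icc a'' a' ⊆ Set.Icc Alo (A k) := fun x hx =>
          ⟨le_trans ha''mem.1 hx.1, le_trans (le_trans hx.2 ha'A) hAjk.le⟩
        have hcontg : ContinuousOn (fun x => b j x - b k x) (Set.Icc a'' a') :=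
          ((hcont j).mono hsubj).sub ((hcont k).mono hsubk)
        have h0mem : (0 : ℝ) ∈ Set.Icc (b j a'' - b k a'') (b j a' - b k a') :=
          ⟨by linarith, by linarith⟩
        obtain ⟨c, hc, hgc0⟩ := intermediate_value_Icc h2 hcontg h0mem
        have hgc : b j c - b k c = 0 := hgc0
        have hcmemj : c ∈ Set.Icc Alo (A j) := hsubj hc
        have hbjc : 0 ≤ b j c :=
          le_trans hbja'' ((hmono j).monotoneOn ha''mem hcmemj hc.1)
        have hbkc : 0 ≤ b k c := by linarith [hgc]
        have hscc := hsc j k hjk c hcmemj hbjc hbkc (by linarith [hgc])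
        rcases eq_or_lt_of_le hc.1 with hEq | hlt
        · -- c = a''
          have hca' : c < a' := lt_of_le_of_ne hc.2 (by
            intro hE; rw [hE] at hgc; linarith)
          have := hscc.1 a' ha'mem hbja' hbka' hca'
          linarith
        · have := hscc.2 a'' ha''mem hbja'' hbk hlt
          linarith
    · exfalso
      have hbka'' : b k a'' ≤ b k a' :=
        (hmono k).monotoneOn ⟨le_trans haAlo h1, hAk''⟩
          ⟨ha'Alo, le_trans ha'A hAjk.le⟩ h2
      linarith [not_le.mp hbka']
end

section
/- Let f : ℝ × ℝ → ℝ be continuous, strictly decreasing in its first argument (the price) and strictly increasing in its second argument (the accuracy requirement). Let a' < A be real numbers and let 𝔟 : ℝ → ℝ be continuous on [a', A]. Suppose there exist ρ and α with a' ≤ α such that f(ρ, α) = 0 and f(ρ, A) = 𝔟(A), and suppose p' satisfies f(p', a') = 0 and 𝔟(a') > 0. Then there exists a ∈ (a', A] with f(p', a) = 𝔟(a) and f(p', a) > 0. -/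
/-- existence half of the block lemma: if `f` is continuous,
strictly decreasing in the price and strictly increasing in the accuracy, `𝔟`
is continuous on the block `[a', A]`, `ρ` and `α ≥ a'` satisfy `f ρ α = 0` and
`f ρ A = 𝔟 A`, and `p'` satisfies `f p' a' = 0` with `𝔟 a' > 0`, then the
equation `f p' a = 𝔟 a > 0` is attainable in `(a', A]`. -/
theorem block_lemma_existence (f : ℝ → ℝ → ℝ)
    (hfcont : Continuous fun q : ℝ × ℝ => f q.1 q.2)
    (hfdec : ∀ a : ℝ, StrictAnti fun p => f p a)
    (hfinc : ∀ p : ℝ, StrictMono fun a => f p a)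
    (a' A : ℝ) (haA : a' < A) (env : ℝ → ℝ)
    (henv : ContinuousOn env (Set.Icc a' A))
    (ρ α : ℝ) (hα : a' ≤ α) (hρα : f ρ α = 0) (hρA : f ρ A = env A)
    (p' : ℝ) (hp' : f p' a' = 0) (henva' : 0 < env a') :
    ∃ a ∈ Set.Ioc a' A, f p' a = env a ∧ 0 < f p' a := by
  -- p' ≤ ρ
  have hρa' : f ρ a' ≤ 0 := by
    rcases eq_or_lt_of_le hα with h | h
    · rw [h]; exact hρα.le
    · exact le_of_lt (hρα ▸ (hfinc ρ) h)
  have hpρ : p' ≤ ρ := by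
    by_contra h
    push_neg at h
    have := (hfdec a') h
    simp only at this
    linarith [hp' ▸ this]
  have hA : env A ≤ f p' A := by
    rcases eq_or_lt_of_le hpρ with h | h
    · rw [← hρA, h]
    · exact le_of_lt (hρA ▸ (hfdec A) h)
  -- g = f p' - env, IVT
  set g : ℝ → ℝ := fun a => f p' a - env a with hg
  have hgcont : ContinuousOn g (Set.Icc a' A) :=
    ((hfcont.comp (continuous_const.prodMk continuous_id)).continuousOn).sub henv
  have h0 : (0 : ℝ) ∈ Set.Icc (g a') (g A) := by
    constructor
    · simp only [hg, hp']; linarith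
    · simp only [hg]; linarith
  obtain ⟨a, ha, hga⟩ := intermediate_value_Icc haA.le hgcont h0
  have hfa : f p' a = env a := by simpa [hg, sub_eq_zero] using hga
  have hane : a' < a := by
    rcases eq_or_lt_of_le ha.1 with h | h
    · exfalso; rw [← h] at hfa; rw [hp'] at hfa; linarith
    · exact h
  have hpos : 0 < f p' a := by
    have := (hfinc p') hane
    simpa [hp'] using this
  exact ⟨a, ⟨hane, ha.2⟩, hfa, hpos⟩
end

section
/- Let b, 𝐛 : ℝ → ℝ, let α > 0 and ε > 0, and assume: (i) α·|x − y| ≤ |b(x) − b(y)| for all x, y ∈ ℝ; (ii) |𝐛(x) − b(x)| < ε for all x ∈ ℝ. If a and 𝐚 satisfy b(a) = 0 and 𝐛(𝐚) = 0, then |a − 𝐚| < ε/α. -/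
/-- if `b` has lower Lipschitz constant `α` and the true utility `𝐛`
is within pointwise error `ε` of `b`, then the zeros of `b` and `𝐛` differ by
less than `ε / α`. -/
theorem zero_perturbation_bound (b bb : ℝ → ℝ) (α ε : ℝ) (hα : 0 < α) (hε : 0 < ε)
    (hlow : ∀ x y : ℝ, α * |x - y| ≤ |b x - b y|)
    (herr : ∀ x : ℝ, |bb x - b x| < ε)
    (a aa : ℝ) (ha : b a = 0) (haa : bb aa = 0) : |a - aa| < ε / α := by
  have h1 := hlow a aa
  have h2 := herr aa
  rw [ha, haa] at *
  rw [lt_div_iff₀ hα, mul_comm]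
  calc α * |a - aa| ≤ |0 - b aa| := h1
    _ = |0 - b aa - 0| := by ring_nf
    _ < ε := by simpa using h2
end

section
/- Let g, f, 𝐠, 𝐟 : ℝ → ℝ, let 0 < β < α and ε₁, ε₂ > 0, and assume: (i) |g(x) − g(y)| ≥ α·|x − y| for all x, y; (ii) |f(x) − f(y)| ≤ β·|x − y| for all x, y; (iii) |𝐠(x) − g(x)| < ε₁ and |𝐟(x) − f(x)| < ε₂ for all x. If a* and 𝐚* satisfy g(a*) = f(a*) and 𝐠(𝐚*) = 𝐟(𝐚*), then |a* − 𝐚*| < (ε₁ + ε₂)/(α − β). -/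
/-- perturbation bound for the crossing point of two utility
functions: if `g` has lower Lipschitz constant `α`, `f` has upper Lipschitz
constant `β < α`, and the true functions `𝐠, 𝐟` are within pointwise errors
`ε₁, ε₂`, then the crossing points of `(g, f)` and `(𝐠, 𝐟)` differ by less than
`(ε₁ + ε₂) / (α - β)`. -/
theorem crossing_point_perturbation_bound (g f gg ff : ℝ → ℝ) (α β ε₁ ε₂ : ℝ)
    (hβ : 0 < β) (hβα : β < α) (hε₁ : 0 < ε₁) (hε₂ : 0 < ε₂)
    (hg : ∀ x y : ℝ, α * |x - y| ≤ |g x - g y|)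
    (hf : ∀ x y : ℝ, |f x - f y| ≤ β * |x - y|)
    (hgg : ∀ x : ℝ, |gg x - g x| < ε₁)
    (hff : ∀ x : ℝ, |ff x - f x| < ε₂)
    (a aa : ℝ) (ha : g a = f a) (haa : gg aa = ff aa) :
    |a - aa| < (ε₁ + ε₂) / (α - β) := by
  have hαβ : 0 < α - β := by linarith
  rw [lt_div_iff₀ hαβ]
  have h1 : |g aa - f aa| < ε₁ + ε₂ := by
    have := hgg aa; have := hff aa
    have : g aa - f aa = (g aa - gg aa) + (ff aa - f aa) := by rw [haa]; ring
    calc |g aa - f aa| = |(g aa - gg aa) + (ff aa - f aa)| := by rw [this]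
      _ ≤ |g aa - gg aa| + |ff aa - f aa| := abs_add_le _ _
      _ < ε₁ + ε₂ := by
          have h1 := hgg aa; have h2 := hff aa
          rw [abs_sub_comm] at h1; linarith
  have h2 : α * |a - aa| - β * |a - aa| ≤ |g aa - f aa| := by
    have hga := hg a aa
    have hfa := hf a aa
    have : g aa - f aa = (g aa - g a) - (f aa - f a) := by rw [ha]; ring
    calc α * |a - aa| - β * |a - aa| ≤ |g a - g aa| - |f a - f aa| := by linarith
      _ ≤ |(g aa - g a) - (f aa - f a)| := by
          rw [abs_sub_comm (g a), abs_sub_comm (f a)]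
          exact le_trans (abs_sub_abs_le_abs_sub _ _) (le_refl _)
      _ = |g aa - f aa| := by rw [this]
  nlinarith [abs_nonneg (a - aa)]
end
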